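/- arXiv:2006.08467 — 2 statements merged into one kernel-verified Lean document; each statement's English description precedes it below -/
import Mathlib

section
/- If the oblivious chase of (I_a, Σ) on the critical instance I_a terminates, then there exists a constant k_d such that for every instance I over the same predicates, the existential depth of every term in the oblivious chase of (I, Σ) is bounded by k_d. -/
namespace ChasePaper

/-- Rules: atoms are (predicate, list of variables). -/
structure Rule (P V : Type) where
  body : List (P × List V)
  head : List (P × List V)

/-- Terms appearing in the chase: constants, (instance) variables, and fresh
variables `z_{(σ,π)}` named by the rule, the existential variable, and a substitution. -/
inductive GTerm (P C V : Type) where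
  | const : C → GTerm P C V
  | var   : V → GTerm P C V
  | fresh : Rule P V → V → (V → GTerm P C V) → GTerm P C V

abbrev GAtom (P C V : Type) := P × List (GTerm P C V)

variable {P C V : Type}

def bodyVars (σ : Rule P V) : List V := σ.body.flatMap Prod.snd
def headVars (σ : Rule P V) : List V := σ.head.flatMap Prod.snd
def frontier [DecidableEq V] (σ : Rule P V) : List V :=
  (bodyVars σ).filter (· ∈ headVars σ)

/-- A rule is datalog if all head variables occur in the body. -/
def IsDatalog (σ : Rule P V) : Prop := ∀ v ∈ headVars σ, v ∈ bodyVars σ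
/-- A rule is fully-existential if every head atom contains an existential variable. -/
def IsFE (σ : Rule P V) : Prop := ∀ a ∈ σ.head, ∃ v ∈ a.2, v ∉ bodyVars σ

def applyAtom (π : V → GTerm P C V) (a : P × List V) : GAtom P C V :=
  (a.1, a.2.map π)

def restrictBody [DecidableEq V] (σ : Rule P V) (π : V → GTerm P C V) : V → GTerm P C V :=
  fun u => if u ∈ bodyVars σ then π u else GTerm.var u

def restrictFr [DecidableEq V] (σ : Rule P V) (π : V → GTerm P C V) : V → GTerm P C V :=
  fun u => if u ∈ frontier σ then π u else GTerm.var u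

/-- Oblivious naming of fresh variables: `z_{(σ,π)}`. -/
def extendO [DecidableEq V] (σ : Rule P V) (π : V → GTerm P C V) : V → GTerm P C V :=
  fun v => if v ∈ bodyVars σ then π v else GTerm.fresh σ v (restrictBody σ π)

/-- Semi-oblivious naming of fresh variables: `z_{(σ,π|fr(σ))}`. -/
def extendSO [DecidableEq V] (σ : Rule P V) (π : V → GTerm P C V) : V → GTerm P C V :=
  fun v => if v ∈ bodyVars σ then π v else GTerm.fresh σ v (restrictFr σ π)

def isTrigger (σ : Rule P V) (π : V → GTerm P C V) (S : Set (GAtom P C V)) : Prop :=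
  ∀ a ∈ σ.body, applyAtom π a ∈ S

/-- Breadth-first oblivious chase. -/
def ochase [DecidableEq V] (Rs : Set (Rule P V)) (I : Set (GAtom P C V)) : ℕ → Set (GAtom P C V)
  | 0 => I
  | i+1 => ochase Rs I i ∪
      {f | ∃ σ ∈ Rs, ∃ π, isTrigger σ π (ochase Rs I i) ∧ ∃ a ∈ σ.head, f = applyAtom (extendO σ π) a}

/-- Breadth-first semi-oblivious chase. -/
def sochase [DecidableEq V] (Rs : Set (Rule P V)) (I : Set (GAtom P C V)) : ℕ → Set (GAtom P C V)
  | 0 => I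
  | i+1 => sochase Rs I i ∪
      {f | ∃ σ ∈ Rs, ∃ π, isTrigger σ π (sochase Rs I i) ∧ ∃ a ∈ σ.head, f = applyAtom (extendSO σ π) a}

def ochaseFull [DecidableEq V] (Rs : Set (Rule P V)) (I : Set (GAtom P C V)) : Set (GAtom P C V) :=
  ⋃ i, ochase Rs I i
def sochaseFull [DecidableEq V] (Rs : Set (Rule P V)) (I : Set (GAtom P C V)) : Set (GAtom P C V) :=
  ⋃ i, sochase Rs I i

/-- Rank of a fact: the smallest breadth-first round at which it appears. -/
noncomputable def rankO [DecidableEq V] (Rs : Set (Rule P V)) (I : Set (GAtom P C V))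
    (f : GAtom P C V) : ℕ := sInf {i | f ∈ ochase Rs I i}
noncomputable def rankSO [DecidableEq V] (Rs : Set (Rule P V)) (I : Set (GAtom P C V))
    (f : GAtom P C V) : ℕ := sInf {i | f ∈ sochase Rs I i}

/-- Rank of a term: the smallest round at which some fact contains it. -/
noncomputable def trankO [DecidableEq V] (Rs : Set (Rule P V)) (I : Set (GAtom P C V))
    (t : GTerm P C V) : ℕ := sInf {i | ∃ f ∈ ochase Rs I i, t ∈ f.2}
noncomputable def trankSO [DecidableEq V] (Rs : Set (Rule P V)) (I : Set (GAtom P C V))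
    (t : GTerm P C V) : ℕ := sInf {i | ∃ f ∈ sochase Rs I i, t ∈ f.2}

/-- Existential depth of a term. -/
def depth : GTerm P C V → ℕ
  | .const _ => 0
  | .var _ => 0
  | .fresh σ _ π => 1 + List.foldr (fun v m => max (depth (π v)) m) 0 (bodyVars σ)

/-- Frontier existential depth of a term. -/
def frdepth [DecidableEq V] : GTerm P C V → ℕ
  | .const _ => 0
  | .var _ => 0
  | .fresh σ _ π =>
      if frontier σ = ([] : List V) then 1
      else 1 + List.foldr (fun v m => max (frdepth (π v)) m) 0 (frontier σ)

/-- Existential depth of a fact: max depth of its terms. -/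
def depthF (f : GAtom P C V) : ℕ := List.foldr (fun t m => max (depth t) m) 0 f.2
def frdepthF [DecidableEq V] (f : GAtom P C V) : ℕ :=
  List.foldr (fun t m => max (frdepth t) m) 0 f.2

/-- Active domain of a set of atoms. -/
def adom (S : Set (GAtom P C V)) : Set (GTerm P C V) := {t | ∃ f ∈ S, t ∈ f.2}

def mapAtom (h : GTerm P C V → GTerm P C V) (f : GAtom P C V) : GAtom P C V :=
  (f.1, f.2.map h)

/-- An embedding from `S` to `S'`: a substitution mapping every atom of `S` into `S'`. -/
def IsEmbedding (h : GTerm P C V → GTerm P C V) (S S' : Set (GAtom P C V)) : Prop :=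
  ∀ f ∈ S, mapAtom h f ∈ S'

/-- `I` is an instance w.r.t. an arity function: finite, arity-correct,
and using only constants and variables. -/
def IsInstance (ar : P → ℕ) (I : Set (GAtom P C V)) : Prop :=
  I.Finite ∧ ∀ f ∈ I, f.2.length = ar f.1 ∧
    ∀ t ∈ f.2, (∃ c, t = GTerm.const c) ∨ (∃ v, t = GTerm.var v)

def RuleOk (ar : P → ℕ) (σ : Rule P V) : Prop :=
  ∀ a ∈ σ.body ++ σ.head, a.2.length = ar a.1

/-- The critical instance over `ar` with special constant `a`. -/
def critical (ar : P → ℕ) (a : C) : Set (GAtom P C V) :=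
  {f | f.2 = List.replicate (ar f.1) (GTerm.const a)}


/-- Collapse map: sends all constants/variables to `const a`, preserves fresh structure. -/
def collapse [DecidableEq V] (a : C) : GTerm P C V → GTerm P C V
  | .const _ => .const a
  | .var _ => .const a
  | .fresh σ v π =>
      .fresh σ v (fun u => if u ∈ bodyVars σ then collapse a (π u) else .var u)

lemma foldr_max_le {α} (g : α → ℕ) (i : ℕ) :
    ∀ l : List α, (∀ v ∈ l, g v ≤ i) → l.foldr (fun v m => max (g v) m) 0 ≤ i
  | [], _ => Nat.zero_le i
  | x :: xs, h => by
      simp only [List.foldr]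
      exact max_le (h x (.head _)) (foldr_max_le g i xs fun v hv => h v (.tail _ hv))

lemma foldr_max_congr {α} (g g' : α → ℕ) (l : List α) (h : ∀ v ∈ l, g v = g' v) :
    l.foldr (fun v m => max (g v) m) 0 = l.foldr (fun v m => max (g' v) m) 0 := by
  induction l with
  | nil => rfl
  | cons x xs ih =>
      simp only [List.foldr, h x (.head _), ih fun v hv => h v (.tail _ hv)]

lemma depth_collapse [DecidableEq V] (a : C) :
    ∀ t : GTerm P C V, depth (collapse a t) = depth t := by
  intro t
  induction t with
  | const c => rfl
  | var v => rfl
  | fresh σ v π ih =>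
      simp only [collapse, depth]
      congr 1
      apply foldr_max_congr
      intro u hu
      simp only [hu, if_true, ih u]

lemma collapse_extendO [DecidableEq V] (a : C) (σ : Rule P V) (π : V → GTerm P C V) :
    (fun v => collapse a (extendO σ π v)) = extendO σ (fun u => collapse a (π u)) := by
  funext v
  unfold extendO
  by_cases hv : v ∈ bodyVars σ
  · simp only [hv, if_true]
  · simp only [hv, if_false, collapse]
    congr 1
    funext u
    by_cases hu : u ∈ bodyVars σ <;> simp [restrictBody, hu]

lemma mapAtom_applyAtom [DecidableEq V] (h : GTerm P C V → GTerm P C V)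
    (π : V → GTerm P C V) (b : P × List V) :
    mapAtom h (applyAtom π b) = applyAtom (fun v => h (π v)) b := by
  simp [mapAtom, applyAtom, List.map_map, Function.comp_def]

lemma embed_chase [DecidableEq V] (ar : P → ℕ) (a : C) (Rs : Set (Rule P V))
    (I : Set (GAtom P C V)) (hI : IsInstance ar I) :
    ∀ i, ∀ f ∈ ochase Rs I i,
      mapAtom (collapse a) f ∈ ochase Rs (critical ar a : Set (GAtom P C V)) i := by
  intro i
  induction i with
  | zero =>
      intro f hf
      obtain ⟨len, hterms⟩ := hI.2 f hf
      show mapAtom (collapse a) f ∈ critical ar a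
      simp only [critical, Set.mem_setOf_eq, mapAtom]
      apply List.eq_replicate_iff.mpr
      constructor
      · simpa using len
      · intro x hx
        obtain ⟨t, ht, rfl⟩ := List.mem_map.mp hx
        rcases hterms t ht with ⟨c, rfl⟩ | ⟨w, rfl⟩ <;> rfl
  | succ i ih =>
      intro f hf
      rcases hf with hf | ⟨σ, hσ, π, htrig, b, hb, rfl⟩
      · exact Or.inl (ih f hf)
      · refine Or.inr ⟨σ, hσ, fun v => collapse a (π v), ?_, b, hb, ?_⟩
        · intro b' hb'
          have := ih _ (htrig b' hb')
          rwa [mapAtom_applyAtom] at this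
        · rw [mapAtom_applyAtom, ← collapse_extendO]

lemma depth_critical [DecidableEq V] (ar : P → ℕ) (a : C) (Rs : Set (Rule P V)) :
    ∀ i, ∀ f ∈ ochase Rs (critical ar a : Set (GAtom P C V)) i, ∀ t ∈ f.2, depth t ≤ i := by
  intro i
  induction i with
  | zero =>
      intro f hf t ht
      have hf' : f.2 = List.replicate (ar f.1) (GTerm.const a) := hf
      rw [hf'] at ht
      rw [List.eq_of_mem_replicate ht]
      exact Nat.le_refl 0
  | succ i ih =>
      intro f hf t ht
      rcases hf with hf | ⟨σ, hσ, π, htrig, b, hb, rfl⟩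
      · exact le_trans (ih f hf t ht) (Nat.le_succ i)
      · have hbody : ∀ u ∈ bodyVars σ, depth (π u) ≤ i := by
          intro u hu
          obtain ⟨b', hb', hu'⟩ := List.mem_flatMap.mp hu
          exact ih _ (htrig b' hb') (π u) (List.mem_map_of_mem (f := π) hu')
        obtain ⟨v, hv, rfl⟩ := List.mem_map.mp ht
        unfold extendO
        by_cases hvb : v ∈ bodyVars σ
        · simp only [hvb, if_true]
          exact le_trans (hbody v hvb) (Nat.le_succ i)
        · simp only [hvb, if_false, depth]
          have : List.foldr (fun u m => max (depth (restrictBody σ π u)) m) 0 (bodyVars σ) ≤ i := by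
            apply foldr_max_le
            intro u hu
            simpa [restrictBody, hu] using hbody u hu
          omega

/-- if the oblivious chase terminates on the critical instance, then
there is a uniform bound `k_d` on the existential depth of all terms of the
oblivious chase, over all instances. -/
theorem statement4 {P C V : Type} [DecidableEq V] (ar : P → ℕ) (a : C)
    (Rs : Set (Rule P V)) (hRs : ∀ σ ∈ Rs, RuleOk ar σ)
    (hterm : ∃ k, ochase Rs (critical ar a : Set (GAtom P C V)) k
        = ochaseFull Rs (critical ar a)) :
    ∃ kd : ℕ, ∀ I : Set (GAtom P C V), IsInstance ar I →
      ∀ t ∈ adom (ochaseFull Rs I), depth t ≤ kd := by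
  obtain ⟨k, hk⟩ := hterm
  refine ⟨k, fun I hI t ht => ?_⟩
  obtain ⟨f, hf, htf⟩ := ht
  obtain ⟨i, hfi⟩ := Set.mem_iUnion.mp hf
  have hcrit : mapAtom (collapse a) f ∈ ochase Rs (critical ar a : Set (GAtom P C V)) k := by
    rw [hk]
    exact Set.mem_iUnion.mpr ⟨i, embed_chase ar a Rs I hI i f hfi⟩
  have := depth_critical ar a Rs k _ hcrit (collapse a t)
    (List.mem_map_of_mem (f := collapse a) htf)
  rwa [depth_collapse] at this

end ChasePaper
end

section
/- Assume Σ ∈ FO-R^AF, i.e., there is a constant k_AF such that for every instance I and every fact f with adom(f) ⊆ adom(I), if f ∈ o-chase(I,Σ) then rank(f) ≤ k_AF. Then for every instance I and every fact f ∈ o-chase(I,Σ), rank(f) ≤ depth(f)·(k_AF + 1) + k_AF, where depth is existential depth. -/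
namespace ChasePaper

variable {P C V : Type}

section Aux

variable [DecidableEq V]

lemma ochase_mono {Rs : Set (Rule P V)} {I : Set (GAtom P C V)} {i j : ℕ} (h : i ≤ j) :
    ochase Rs I i ⊆ ochase Rs I j := by
  induction j with
  | zero => simpa [Nat.le_zero.mp h]
  | succ j ih =>
    rcases Nat.lt_or_ge i (j+1) with hlt | hge
    · exact fun f hf => Or.inl (ih (Nat.lt_succ_iff.mp hlt) hf)
    · have : i = j + 1 := le_antisymm h hge
      subst this; exact fun f hf => hf

lemma ochase_comp (Rs : Set (Rule P V)) (I : Set (GAtom P C V)) (k : ℕ) :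
    ∀ j, ochase Rs (ochase Rs I k) j = ochase Rs I (k + j) := by
  intro j
  induction j with
  | zero => rfl
  | succ j ih => show _ ∪ _ = _ ∪ _; rw [ih]; rfl

lemma adom_mono {S S' : Set (GAtom P C V)} (h : S ⊆ S') : adom S ⊆ adom S' :=
  fun _ ⟨f, hf, ht⟩ => ⟨f, h hf, ht⟩

lemma mem_ochase_rankO {Rs : Set (Rule P V)} {I : Set (GAtom P C V)} {f : GAtom P C V}
    (h : f ∈ ochaseFull Rs I) : f ∈ ochase Rs I (rankO Rs I f) := by
  obtain ⟨i, hi⟩ := Set.mem_iUnion.mp h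
  exact Nat.sInf_mem (⟨i, hi⟩ : Set.Nonempty {n | f ∈ ochase Rs I n})

lemma le_foldr_max {α : Type*} (g : α → ℕ) :
    ∀ (l : List α), ∀ x ∈ l, g x ≤ l.foldr (fun a m => max (g a) m) 0 := by
  intro l
  induction l with
  | nil => intro x hx; simp at hx
  | cons a l ih =>
    intro x hx
    rcases List.mem_cons.mp hx with rfl | hx
    · exact le_max_left _ _
    · exact le_trans (ih x hx) (le_max_right _ _)

lemma mem_bodyVars {σ : Rule P V} {v : V} (h : v ∈ bodyVars σ) :
    ∃ b ∈ σ.body, v ∈ b.2 := by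
  simpa [bodyVars, List.mem_flatMap] using h

/-- Key claim: every term of the oblivious chase appears within
`depth t * (kAF + 1)` breadth-first rounds. -/
lemma term_early (Rs : Set (Rule P V)) (kAF : ℕ)
    (hAF : ∀ S : Set (GAtom P C V), ∀ f ∈ ochaseFull Rs S,
        (∀ t ∈ f.2, t ∈ adom S) → rankO Rs S f ≤ kAF)
    (I : Set (GAtom P C V)) :
    ∀ i, ∀ f ∈ ochase Rs I i, ∀ t ∈ f.2, t ∈ adom (ochase Rs I (depth t * (kAF + 1))) := by
  intro i
  induction i with
  | zero =>
    intro f hf t ht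
    exact adom_mono (ochase_mono (Nat.zero_le _)) ⟨f, hf, ht⟩
  | succ i ih =>
    intro f hf t ht
    rcases hf with hf | ⟨σ, hσ, π, hπ, a, ha, rfl⟩
    · exact ih f hf t ht
    · obtain ⟨v, hv, rfl⟩ := List.mem_map.mp ht
      by_cases hvb : v ∈ bodyVars σ
      · -- the term comes from the body
        obtain ⟨b, hb, hvb2⟩ := mem_bodyVars hvb
        have hmem : extendO σ π v ∈ (applyAtom π b).2 := by
          simp only [extendO, if_pos hvb, applyAtom]
          exact List.mem_map.mpr ⟨v, hvb2, rfl⟩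
        exact ih (applyAtom π b) (hπ b hb) _ hmem
      · -- fresh term
        have hfresh : extendO σ π v = GTerm.fresh σ v (restrictBody σ π) := by
          simp [extendO, hvb]
        rw [hfresh]
        set D := List.foldr (fun u m => max (depth (restrictBody σ π u)) m) 0 (bodyVars σ) with hD
        have hdepth : depth (GTerm.fresh σ v (restrictBody σ π)) = 1 + D := rfl
        -- every body term has depth ≤ D
        have hbd : ∀ u ∈ bodyVars σ, depth (π u) ≤ D := by
          intro u hu
          have := le_foldr_max (fun u => depth (restrictBody σ π u)) (bodyVars σ) u hu
          have h2 : depth (restrictBody σ π u) = depth (π u) := by simp [restrictBody, if_pos hu]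
          rw [← h2]; exact this
        set S := ochase Rs I (D * (kAF + 1)) with hS
        -- every body fact is in ochase at level D*(kAF+1)+kAF
        have hbody : ∀ b ∈ σ.body, applyAtom π b ∈ ochase Rs I (D * (kAF + 1) + kAF) := by
          intro b hb
          have hg : applyAtom π b ∈ ochase Rs I i := hπ b hb
          have hgfull : applyAtom π b ∈ ochaseFull Rs S := by
            refine Set.mem_iUnion.mpr ⟨i, ?_⟩
            rw [hS, ochase_comp]
            exact ochase_mono (Nat.le_add_left _ _) hg
          have hterms : ∀ t ∈ (applyAtom π b).2, t ∈ adom S := by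
            intro t ht'
            obtain ⟨u, hu, rfl⟩ := List.mem_map.mp ht'
            have huB : u ∈ bodyVars σ := by
              simp [bodyVars, List.mem_flatMap]; exact ⟨b.1, b.2, hb, hu⟩
            have h1 := ih (applyAtom π b) hg (π u) (List.mem_map.mpr ⟨u, hu, rfl⟩)
            refine adom_mono (ochase_mono ?_) h1
            exact Nat.mul_le_mul_right _ (hbd u huB)
          have hrk := hAF S _ hgfull hterms
          have hmem := ochase_mono hrk (mem_ochase_rankO hgfull)
          rwa [hS, ochase_comp] at hmem
        -- the trigger fires again at that level
        have hnew : applyAtom (extendO σ π) a ∈ ochase Rs I (D * (kAF + 1) + kAF + 1) :=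
          Or.inr ⟨σ, hσ, π, hbody, a, ha, rfl⟩
        refine adom_mono (ochase_mono ?_) ⟨_, hnew, ?_⟩
        · rw [hdepth]; ring_nf; omega
        · rw [← hfresh]; exact List.mem_map.mpr ⟨v, hv, rfl⟩

end Aux

/-- if (as a consequence of FO-rewritability of full-atomic
queries) every fact whose terms all lie in the active domain of an instance is
derived within `k_AF` oblivious breadth-first rounds from that instance, then
for every instance `I` and fact `f` of the oblivious chase,
`rank(f) ≤ depth(f)·(k_AF + 1) + k_AF`. -/
theorem statement14 {P C V : Type} [DecidableEq V] (Rs : Set (Rule P V)) (kAF : ℕ)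
    (hAF : ∀ S : Set (GAtom P C V), ∀ f ∈ ochaseFull Rs S,
        (∀ t ∈ f.2, t ∈ adom S) → rankO Rs S f ≤ kAF) :
    ∀ I : Set (GAtom P C V), ∀ f ∈ ochaseFull Rs I,
      rankO Rs I f ≤ depthF f * (kAF + 1) + kAF := by
  intro I f hf
  obtain ⟨i, hi⟩ := Set.mem_iUnion.mp hf
  set D := depthF f with hD
  set S := ochase Rs I (D * (kAF + 1)) with hS
  have hterms : ∀ t ∈ f.2, t ∈ adom S := by
    intro t ht
    have h1 := term_early Rs kAF hAF I i f hi t ht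
    have h2 : depth t ≤ D := le_foldr_max depth f.2 t ht
    exact adom_mono (ochase_mono (Nat.mul_le_mul_right _ h2)) h1
  have hfull : f ∈ ochaseFull Rs S := by
    refine Set.mem_iUnion.mpr ⟨i, ?_⟩
    rw [hS, ochase_comp]
    exact ochase_mono (Nat.le_add_left _ _) hi
  have hrk := hAF S f hfull hterms
  have hmem := ochase_mono hrk (mem_ochase_rankO hfull)
  rw [hS, ochase_comp] at hmem
  exact Nat.sInf_le hmem

end ChasePaper
end
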